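/- In the automaton A constructed from B by adding states q_f, q_n and letter $ (with δ(q,$)(q_f)=1 for q ∈ F_B, δ(q,$)(q_n)=1 for q ∈ Q_B \ F_B, and δ(q_f,σ)(q_n)=δ(q_n,σ)(q_n)=1 for all σ), the acceptance probability with accepting set {q_f} satisfies: P_A(w) = P_B(v) if w = v$ for some v ∈ Σ_B*, and P_A(w) = 0 otherwise. Consequently val(A) = val(B), and in particular val(A) = 1 iff val(B) = 1. -/

import Mathlib

open Filter Finset

/-- A probability distribution on a finite type. -/
def IsDist {Q : Type*} [Fintype Q] (d : Q → ℝ) : Prop :=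
  (∀ q, 0 ≤ d q) ∧ ∑ q, d q = 1

/-- The norm of a distribution: its maximal value. -/
noncomputable def dnorm {Q : Type*} [Fintype Q] [Nonempty Q] (d : Q → ℝ) : ℝ :=
  Finset.univ.sup' Finset.univ_nonempty d

/-- A probabilistic automaton over states `Q` and alphabet `A`. -/
structure PA (Q : Type*) (A : Type*) [Fintype Q] where
  init : Q → ℝ
  init_dist : IsDist init
  trans : Q → A → Q → ℝ
  trans_dist : ∀ q σ, IsDist (trans q σ)

variable {Q A : Type*} [Fintype Q]

/-- One transition step applied to a distribution. -/
def PAstep (M : PA Q A) (d : Q → ℝ) (σ : A) : Q → ℝ :=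
  fun q => ∑ q', d q' * M.trans q' σ q

/-- Computation of a PA on a finite word, starting from distribution `μ`. -/
def PArun (M : PA Q A) (μ : Q → ℝ) (w : List A) : Q → ℝ :=
  w.foldl (PAstep M) μ

/-- Outcome of a PA on an infinite word, started from `μ`. -/
def PAoutcomeFrom (M : PA Q A) (μ : Q → ℝ) (w : ℕ → A) : ℕ → Q → ℝ
  | 0 => μ
  | n + 1 => PAstep M (PAoutcomeFrom M μ w n) (w n)

/-- Outcome of a PA on an infinite word from the initial distribution. -/
def PAoutcome (M : PA Q A) (w : ℕ → A) : ℕ → Q → ℝ :=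
  PAoutcomeFrom M M.init w

lemma isDist_step (M : PA Q A) {d : Q → ℝ} (hd : IsDist d) (σ : A) :
    IsDist (PAstep M d σ) := by
  constructor
  · intro q
    exact Finset.sum_nonneg fun q' _ => mul_nonneg (hd.1 q') ((M.trans_dist q' σ).1 q)
  · unfold PAstep
    rw [Finset.sum_comm]
    have h : ∀ q', ∑ q, d q' * M.trans q' σ q = d q' := fun q' => by
      rw [← Finset.mul_sum, (M.trans_dist q' σ).2, mul_one]
    simp_rw [h]
    exact hd.2

lemma isDist_run (M : PA Q A) {μ : Q → ℝ} (hd : IsDist μ) (w : List A) :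
    IsDist (PArun M μ w) := by
  induction w generalizing μ with
  | nil => exact hd
  | cons σ w ih => exact ih (isDist_step M hd σ)

lemma pa_dist_one {d : Q → ℝ} (hd : IsDist d) {q : Q} (h1 : d q = 1) {q' : Q} (hne : q' ≠ q) :
    d q' = 0 := by
  haveI := Classical.decEq Q
  have h := hd.2
  rw [← Finset.add_sum_erase _ _ (Finset.mem_univ q), h1] at h
  have hz : ∑ x ∈ Finset.univ.erase q, d x = 0 := by linarith
  exact (Finset.sum_eq_zero_iff_of_nonneg (fun x _ => hd.1 x)).1 hz q'
    (Finset.mem_erase.2 ⟨hne, Finset.mem_univ q'⟩)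

lemma list_all_inl {S U : Type*} (u : List (S ⊕ U)) (h : ∀ y ∈ u, ∃ s, y = Sum.inl s) :
    ∃ v : List S, u = v.map Sum.inl := by
  induction u with
  | nil => exact ⟨[], rfl⟩
  | cons y u ih =>
    obtain ⟨s, rfl⟩ := h y List.mem_cons_self
    obtain ⟨v, rfl⟩ := ih fun z hz => h z (List.mem_cons_of_mem _ hz)
    exact ⟨s :: v, rfl⟩

/-- The automaton `A` is built from `B` by adding fresh states `q_f = inr true`
    and `q_n = inr false` and a fresh letter `$ = Sum.inr ()`:
    `δ(q,$)(q_f) = 1` for accepting `q`, `δ(q,$)(q_n) = 1` otherwise, and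
    `δ(q_f,σ)(q_n) = δ(q_n,σ)(q_n) = 1` for every letter `σ`.  Then
    `P_A(v$) = P_B(v)` for `v ∈ Σ_B*`, `P_A(w) = 0` for all other words,
    `val(A) = val(B)`, and `val(A) = 1 ↔ val(B) = 1`. -/
theorem stmt_12 {QB SB : Type*} [Fintype QB]
    (B : PA QB SB) (F : Finset QB) (q0 : QB)
    (hq0 : B.init q0 = 1)
    (M : PA (QB ⊕ Bool) (SB ⊕ Unit))
    (hMinit : ∀ q, M.init (Sum.inl q) = B.init q)
    (hMinit' : ∀ b, M.init (Sum.inr b) = 0)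
    (hMtrans : ∀ q σ q', M.trans (Sum.inl q) (Sum.inl σ) (Sum.inl q') = B.trans q σ q')
    (hdollarF : ∀ q ∈ F, M.trans (Sum.inl q) (Sum.inr ()) (Sum.inr true) = 1)
    (hdollarN : ∀ q ∉ F, M.trans (Sum.inl q) (Sum.inr ()) (Sum.inr false) = 1)
    (hqf : ∀ σ, M.trans (Sum.inr true) σ (Sum.inr false) = 1)
    (hqn : ∀ σ, M.trans (Sum.inr false) σ (Sum.inr false) = 1) :
    (∀ v : List SB,
      PArun M M.init (v.map Sum.inl ++ [Sum.inr ()]) (Sum.inr true) =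
        ∑ q ∈ F, PArun B B.init v q) ∧
    (∀ w : List (SB ⊕ Unit), (¬ ∃ v : List SB, w = v.map Sum.inl ++ [Sum.inr ()]) →
      PArun M M.init w (Sum.inr true) = 0) ∧
    (⨆ w : List (SB ⊕ Unit), PArun M M.init w (Sum.inr true)) =
      (⨆ v : List SB, ∑ q ∈ F, PArun B B.init v q) ∧
    ((⨆ w : List (SB ⊕ Unit), PArun M M.init w (Sum.inr true)) = 1 ↔
      (⨆ v : List SB, ∑ q ∈ F, PArun B B.init v q) = 1) := by
  classical
  -- transitions from `inl` on letters of `Σ_B` never reach the new states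
  have hIL : ∀ (q : QB) (σ : SB) (b : Bool),
      M.trans (Sum.inl q) (Sum.inl σ) (Sum.inr b) = 0 := by
    intro q σ
    have hsum := (M.trans_dist (Sum.inl q) (Sum.inl σ)).2
    rw [Fintype.sum_sum_type, Fintype.sum_bool] at hsum
    have h1 : ∑ a, M.trans (Sum.inl q) (Sum.inl σ) (Sum.inl a) = 1 := by
      simp_rw [hMtrans]; exact (B.trans_dist q σ).2
    have nn1 := (M.trans_dist (Sum.inl q) (Sum.inl σ)).1 (Sum.inr true)
    have nn2 := (M.trans_dist (Sum.inl q) (Sum.inl σ)).1 (Sum.inr false)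
    intro b; cases b <;> linarith
  have hTf : ∀ (σ : SB ⊕ Unit) (q' : QB ⊕ Bool), q' ≠ Sum.inr false →
      M.trans (Sum.inr true) σ q' = 0 :=
    fun σ q' h => pa_dist_one (M.trans_dist _ σ) (hqf σ) h
  have hTn : ∀ (σ : SB ⊕ Unit) (q' : QB ⊕ Bool), q' ≠ Sum.inr false →
      M.trans (Sum.inr false) σ q' = 0 :=
    fun σ q' h => pa_dist_one (M.trans_dist _ σ) (hqn σ) h
  have hDF : ∀ q ∈ F, ∀ (q' : QB ⊕ Bool), q' ≠ Sum.inr true →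
      M.trans (Sum.inl q) (Sum.inr ()) q' = 0 :=
    fun q hq q' h => pa_dist_one (M.trans_dist _ _) (hdollarF q hq) h
  have hDN : ∀ q ∉ F, ∀ (q' : QB ⊕ Bool), q' ≠ Sum.inr false →
      M.trans (Sum.inl q) (Sum.inr ()) q' = 0 :=
    fun q hq q' h => pa_dist_one (M.trans_dist _ _) (hdollarN q hq) h
  -- a `$`-step sends exactly the accepting mass to `q_f`
  have hstepD : ∀ (μ : QB ⊕ Bool → ℝ),
      PAstep M μ (Sum.inr ()) (Sum.inr true) = ∑ q ∈ F, μ (Sum.inl q) := by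
    intro μ
    unfold PAstep
    rw [Fintype.sum_sum_type]
    have h1 : ∀ a : QB, μ (Sum.inl a) * M.trans (Sum.inl a) (Sum.inr ()) (Sum.inr true) =
        if a ∈ F then μ (Sum.inl a) else 0 := by
      intro a; by_cases ha : a ∈ F
      · simp [ha, hdollarF a ha]
      · simp [ha, hDN a ha (Sum.inr true) (by simp)]
    have h2 : ∀ b : Bool, μ (Sum.inr b) * M.trans (Sum.inr b) (Sum.inr ()) (Sum.inr true) = 0 := by
      intro b; cases b
      · rw [hTn _ _ (by simp), mul_zero]
      · rw [hTf _ _ (by simp), mul_zero]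
    simp_rw [h1, h2]
    simp
  -- running on letters from `Σ_B` simulates `B`
  have hRun : ∀ (v : List SB) (μA : QB ⊕ Bool → ℝ) (μB : QB → ℝ),
      (∀ q, μA (Sum.inl q) = μB q) → (∀ b, μA (Sum.inr b) = 0) →
      (∀ q, PArun M μA (v.map Sum.inl) (Sum.inl q) = PArun B μB v q) ∧
      (∀ b, PArun M μA (v.map Sum.inl) (Sum.inr b) = 0) := by
    intro v
    induction v with
    | nil => intro μA μB h1 h2; exact ⟨h1, h2⟩
    | cons σ v ih =>
      intro μA μB h1 h2
      have hstep1 : ∀ q, PAstep M μA (Sum.inl σ) (Sum.inl q) = PAstep B μB σ q := by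
        intro q
        unfold PAstep
        rw [Fintype.sum_sum_type]
        have hz : ∀ b : Bool, μA (Sum.inr b) * M.trans (Sum.inr b) (Sum.inl σ) (Sum.inl q) = 0 :=
          fun b => by rw [h2, zero_mul]
        simp_rw [hz, h1, hMtrans]
        simp
      have hstep2 : ∀ b, PAstep M μA (Sum.inl σ) (Sum.inr b) = 0 := by
        intro b
        unfold PAstep
        rw [Fintype.sum_sum_type]
        have hz : ∀ b' : Bool, μA (Sum.inr b') * M.trans (Sum.inr b') (Sum.inl σ) (Sum.inr b) = 0 :=
          fun b' => by rw [h2, zero_mul]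
        simp_rw [hz, hIL]
        simp
      simpa only [List.map_cons, PArun, List.foldl_cons] using ih _ _ hstep1 hstep2
  -- once the `inl`-mass is zero, it stays zero
  have hinlzero_step : ∀ (μ : QB ⊕ Bool → ℝ) (σ : SB ⊕ Unit), (∀ q, μ (Sum.inl q) = 0) →
      ∀ q, PAstep M μ σ (Sum.inl q) = 0 := by
    intro μ σ h q
    unfold PAstep
    rw [Fintype.sum_sum_type]
    have e1 : ∀ a, μ (Sum.inl a) * M.trans (Sum.inl a) σ (Sum.inl q) = 0 :=
      fun a => by rw [h, zero_mul]
    have e2 : ∀ b : Bool, μ (Sum.inr b) * M.trans (Sum.inr b) σ (Sum.inl q) = 0 := by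
      intro b; cases b
      · rw [hTn σ _ (by simp), mul_zero]
      · rw [hTf σ _ (by simp), mul_zero]
    simp_rw [e1, e2]
    simp
  -- if the `inl`-mass is zero, one more step puts zero mass on `q_f`
  have htrue_step : ∀ (μ : QB ⊕ Bool → ℝ) (σ : SB ⊕ Unit), (∀ q, μ (Sum.inl q) = 0) →
      PAstep M μ σ (Sum.inr true) = 0 := by
    intro μ σ h
    unfold PAstep
    rw [Fintype.sum_sum_type]
    have e1 : ∀ a, μ (Sum.inl a) * M.trans (Sum.inl a) σ (Sum.inr true) = 0 :=
      fun a => by rw [h, zero_mul]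
    have e2 : ∀ b : Bool, μ (Sum.inr b) * M.trans (Sum.inr b) σ (Sum.inr true) = 0 := by
      intro b; cases b
      · rw [hTn σ _ (by simp), mul_zero]
      · rw [hTf σ _ (by simp), mul_zero]
    simp_rw [e1, e2]
    simp
  -- any letter from `inl`-position after `$` keeps `inr true` mass at zero
  have hstep_inl_true : ∀ (μ : QB ⊕ Bool → ℝ) (σ : SB),
      PAstep M μ (Sum.inl σ) (Sum.inr true) = 0 := by
    intro μ σ
    unfold PAstep
    rw [Fintype.sum_sum_type]
    have e1 : ∀ a, μ (Sum.inl a) * M.trans (Sum.inl a) (Sum.inl σ) (Sum.inr true) = 0 :=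
      fun a => by rw [hIL, mul_zero]
    have e2 : ∀ b : Bool, μ (Sum.inr b) * M.trans (Sum.inr b) (Sum.inl σ) (Sum.inr true) = 0 := by
      intro b; cases b
      · rw [hTn _ _ (by simp), mul_zero]
      · rw [hTf _ _ (by simp), mul_zero]
    simp_rw [e1, e2]
    simp
  -- a `$`-step leaves no mass on `inl`
  have hdollar_inl : ∀ (μ : QB ⊕ Bool → ℝ) (q : QB),
      PAstep M μ (Sum.inr ()) (Sum.inl q) = 0 := by
    intro μ q
    unfold PAstep
    rw [Fintype.sum_sum_type]
    have e1 : ∀ a, μ (Sum.inl a) * M.trans (Sum.inl a) (Sum.inr ()) (Sum.inl q) = 0 := by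
      intro a; by_cases ha : a ∈ F
      · rw [hDF a ha _ (by simp), mul_zero]
      · rw [hDN a ha _ (by simp), mul_zero]
    have e2 : ∀ b : Bool, μ (Sum.inr b) * M.trans (Sum.inr b) (Sum.inr ()) (Sum.inl q) = 0 := by
      intro b; cases b
      · rw [hTn _ _ (by simp), mul_zero]
      · rw [hTf _ _ (by simp), mul_zero]
    simp_rw [e1, e2]
    simp
  have hinv : ∀ (t : List (SB ⊕ Unit)) (μ : QB ⊕ Bool → ℝ), (∀ q, μ (Sum.inl q) = 0) →
      ∀ q, PArun M μ t (Sum.inl q) = 0 := by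
    intro t
    induction t with
    | nil => intro μ h; exact h
    | cons σ t ih =>
      intro μ h
      exact ih _ (hinlzero_step μ σ h)
  -- Part 1
  have part1 : ∀ v : List SB,
      PArun M M.init (v.map Sum.inl ++ [Sum.inr ()]) (Sum.inr true) =
        ∑ q ∈ F, PArun B B.init v q := by
    intro v
    have h := hRun v M.init B.init hMinit hMinit'
    show List.foldl (PAstep M) M.init (v.map Sum.inl ++ [Sum.inr ()]) (Sum.inr true) = _
    rw [List.foldl_append, List.foldl_cons, List.foldl_nil]
    rw [hstepD]
    exact Finset.sum_congr rfl fun q _ => h.1 q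
  -- Part 2
  have part2 : ∀ w : List (SB ⊕ Unit), (¬ ∃ v : List SB, w = v.map Sum.inl ++ [Sum.inr ()]) →
      PArun M M.init w (Sum.inr true) = 0 := by
    intro w hw
    rcases List.eq_nil_or_concat w with rfl | ⟨u, x, rfl⟩
    · exact hMinit' true
    · rw [List.concat_eq_append] at hw ⊢
      show List.foldl (PAstep M) M.init (u ++ [x]) (Sum.inr true) = 0
      rw [List.foldl_append, List.foldl_cons, List.foldl_nil]
      cases x with
      | inl σ => exact hstep_inl_true _ σ
      | inr u' =>
        cases u'
        have hu : ¬ ∀ y ∈ u, ∃ s, y = Sum.inl s := by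
          intro hall
          obtain ⟨v, rfl⟩ := list_all_inl u hall
          exact hw ⟨v, rfl⟩
        push_neg at hu
        obtain ⟨y, hy, hyn⟩ := hu
        have hy' : y = Sum.inr () := by
          cases y with
          | inl s => exact absurd rfl (hyn s)
          | inr u2 => cases u2; rfl
        subst hy'
        obtain ⟨s, t, rfl⟩ := List.append_of_mem hy
        have hz : ∀ q, List.foldl (PAstep M) M.init (s ++ Sum.inr () :: t) (Sum.inl q) = 0 := by
          rw [List.foldl_append]
          intro q
          rw [List.foldl_cons]
          exact hinv t _ (hdollar_inl _) q
        exact htrue_step _ _ hz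
  -- Part 3
  have hBd := fun v => isDist_run B B.init_dist v
  have hMd := fun w => isDist_run M M.init_dist w
  have hBnn : ∀ v : List SB, 0 ≤ ∑ q ∈ F, PArun B B.init v q :=
    fun v => Finset.sum_nonneg fun q _ => (hBd v).1 q
  have hB1 : ∀ v : List SB, ∑ q ∈ F, PArun B B.init v q ≤ 1 := by
    intro v
    calc ∑ q ∈ F, PArun B B.init v q ≤ ∑ q, PArun B B.init v q :=
          Finset.sum_le_sum_of_subset_of_nonneg (Finset.subset_univ F)
            (fun q _ _ => (hBd v).1 q)
      _ = 1 := (hBd v).2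
  have hM1 : ∀ w : List (SB ⊕ Unit), PArun M M.init w (Sum.inr true) ≤ 1 := by
    intro w
    calc PArun M M.init w (Sum.inr true) ≤ ∑ q, PArun M M.init w q :=
          Finset.single_le_sum (fun q _ => (hMd w).1 q) (Finset.mem_univ _)
      _ = 1 := (hMd w).2
  have bddB : BddAbove (Set.range fun v : List SB => ∑ q ∈ F, PArun B B.init v q) :=
    ⟨1, by rintro x ⟨v, rfl⟩; exact hB1 v⟩
  have bddM : BddAbove (Set.range fun w : List (SB ⊕ Unit) =>
      PArun M M.init w (Sum.inr true)) := ⟨1, by rintro x ⟨w, rfl⟩; exact hM1 w⟩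
  have part3 : (⨆ w : List (SB ⊕ Unit), PArun M M.init w (Sum.inr true)) =
      (⨆ v : List SB, ∑ q ∈ F, PArun B B.init v q) := by
    apply le_antisymm
    · apply ciSup_le
      intro w
      by_cases h : ∃ v : List SB, w = v.map Sum.inl ++ [Sum.inr ()]
      · obtain ⟨v, rfl⟩ := h
        rw [part1 v]
        exact le_ciSup bddB v
      · rw [part2 w h]
        exact le_trans (hBnn []) (le_ciSup bddB ([] : List SB))
    · apply ciSup_le
      intro v
      rw [← part1 v]
      exact le_ciSup bddM _
  exact ⟨part1, part2, part3, by rw [part3]⟩
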